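/- Let F_1,...,F_k be independent Bernoulli variables with parameters θ_i ∈ [0,1/2] for all i, and suppose ∑_i θ_i > 1/2. Then the probability that ∑ F_i is odd is at least 2^{-4}. -/

import Mathlib

open MeasureTheory

private lemma weierstrass_aux {ι : Type*} (s : Finset ι) (a : ι → ℝ)
    (ha : ∀ i ∈ s, 0 ≤ a i) : 1 + ∑ i ∈ s, a i ≤ ∏ i ∈ s, (1 + a i) := by
  classical
  induction s using Finset.induction_on with
  | empty => simp
  | insert _ _ hi ih =>
    rename_i j t
    rw [Finset.sum_insert hi, Finset.prod_insert hi]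
    have h1 : 1 + ∑ i ∈ t, a i ≤ ∏ i ∈ t, (1 + a i) :=
      ih fun i h => ha i (Finset.mem_insert_of_mem h)
    have h2 : 0 ≤ a j := ha j (Finset.mem_insert_self _ _)
    have h3 : 0 ≤ ∑ i ∈ t, a i := Finset.sum_nonneg fun i h => ha i (Finset.mem_insert_of_mem h)
    nlinarith

private lemma integral_prod_indep {Ω : Type*} [MeasurableSpace Ω] (μ : Measure Ω)
    [IsProbabilityMeasure μ] {ι : Type*} (g : ι → Ω → ℝ)
    (hg : ∀ i, Measurable (g i)) (hb : ∀ i ω, |g i ω| ≤ 1)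
    (hindep : ProbabilityTheory.iIndepFun g μ) (s : Finset ι) :
    ∫ ω, ∏ i ∈ s, g i ω ∂μ = ∏ i ∈ s, ∫ ω, g i ω ∂μ := by
  classical
  have hint : ∀ t : Finset ι, Integrable (fun ω => ∏ i ∈ t, g i ω) μ := by
    intro t
    refine Integrable.mono' (integrable_const 1)
      (Finset.measurable_prod t fun i _ => hg i).aestronglyMeasurable ?_
    filter_upwards with ω
    rw [Real.norm_eq_abs, Finset.abs_prod]
    exact Finset.prod_le_one (fun i _ => abs_nonneg _) (fun i _ => hb i ω)
  induction s using Finset.induction_on with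
  | empty => simp
  | insert _ _ hi ih =>
    rename_i j t
    simp only [Finset.prod_insert hi]
    have hIF : ProbabilityTheory.IndepFun (g j) (∏ i ∈ t, g i) μ :=
      (hindep.indepFun_finsetProd_of_notMem hg hi).symm
    have hintj : Integrable (g j) μ := by
      refine Integrable.mono' (integrable_const 1) (hg j).aestronglyMeasurable ?_
      filter_upwards with ω
      simpa [Real.norm_eq_abs] using hb j ω
    have hintt : Integrable (∏ i ∈ t, g i) μ :=
      (hint t).congr (Filter.Eventually.of_forall fun ω => (Finset.prod_apply ω t g).symm)
    have key := hIF.integral_mul_eq_mul_integral hintj.aestronglyMeasurable hintt.aestronglyMeasurable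
    calc ∫ ω, g j ω * ∏ i ∈ t, g i ω ∂μ
        = integral μ (g j * ∏ i ∈ t, g i) := by
          apply integral_congr_ae
          filter_upwards with ω
          simp
      _ = integral μ (g j) * integral μ (∏ i ∈ t, g i) := key
      _ = (∫ ω, g j ω ∂μ) * ∫ ω, ∏ i ∈ t, g i ω ∂μ := by
          congr 1
          apply integral_congr_ae
          filter_upwards with ω
          simp
      _ = (∫ ω, g j ω ∂μ) * ∏ i ∈ t, ∫ ω, g i ω ∂μ := by rw [ih]

/-- If F_1,…,F_k are independent Bernoulli(θ_i) with θ_i ∈ [0,1/2] and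
∑ θ_i > 1/2, then the probability that an odd number of the F_i equal 1 is
at least 2⁻⁴. -/
theorem odd_flips_lower_bound
    {Ω : Type*} [MeasurableSpace Ω] (μ : Measure Ω) [IsProbabilityMeasure μ]
    (k : ℕ) (θ : Fin k → ℝ) (F : Fin k → Ω → Bool)
    (hmeas : ∀ i, Measurable (F i))
    (hindep : ProbabilityTheory.iIndepFun F μ)
    (hθ : ∀ i, (μ {ω | F i ω = true}).toReal = θ i)
    (hθhalf : ∀ i, θ i ∈ Set.Icc (0 : ℝ) (1 / 2))
    (hsum : 1 / 2 < ∑ i, θ i) :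
    (2 : ℝ)⁻¹ ^ 4 ≤
      (μ {ω | Odd (Finset.univ.filter (fun i => F i ω = true)).card}).toReal := by
  classical
  set g : Fin k → Ω → ℝ := fun i ω => if F i ω then -1 else 1 with hg_def
  have hgmeas : ∀ i, Measurable (g i) := by
    intro i
    exact Measurable.comp (f := F i) (g := fun b => if b then (-1 : ℝ) else 1)
      Measurable.of_discrete (hmeas i)
  have hgb : ∀ i ω, |g i ω| ≤ 1 := by
    intro i ω; simp only [hg_def]; split <;> norm_num
  have hgindep : ProbabilityTheory.iIndepFun g μ := by
    exact hindep.comp (fun i b => if b then (-1 : ℝ) else 1)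
      (fun i => Measurable.of_discrete)
  -- integral of each g i
  have hA : ∀ i, MeasurableSet {ω | F i ω = true} := by
    intro i
    exact (hmeas i) (measurableSet_singleton true)
  have hInt_gi : ∀ i, ∫ ω, g i ω ∂μ = 1 - 2 * θ i := by
    intro i
    have heq : (fun ω => g i ω)
        = fun ω => 1 + Set.indicator {ω | F i ω = true} (fun _ => (-2 : ℝ)) ω := by
      funext ω
      by_cases h : F i ω = true <;>
        simp [hg_def, h, Set.indicator_apply, Set.mem_setOf_eq] <;> norm_num
    rw [heq, integral_add (integrable_const 1)
      ((integrable_const (-2 : ℝ)).indicator (hA i)),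
      integral_const, integral_indicator_const _ (hA i)]
    simp only [measureReal_def, measure_univ, ENNReal.toReal_one, smul_eq_mul, mul_one, one_mul]
    rw [hθ i]
    ring
  -- the odd-parity set
  set B : Set Ω := {ω | Odd (Finset.univ.filter (fun i => F i ω = true)).card} with hB_def
  have hN : Measurable fun ω => (Finset.univ.filter (fun i => F i ω = true)).card := by
    have : (fun ω => (Finset.univ.filter (fun i => F i ω = true)).card)
        = fun ω => ∑ i : Fin k, if F i ω then 1 else 0 := by
      funext ω
      rw [Finset.card_filter]
    rw [this]
    refine Finset.measurable_sum _ fun i _ => ?_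
    have heq2 : (fun ω => if F i ω = true then (1 : ℕ) else 0)
        = (fun b : Bool => if b = true then (1 : ℕ) else 0) ∘ F i := rfl
    rw [heq2]
    exact Measurable.of_discrete.comp (hmeas i)
  have hBmeas : MeasurableSet B := hN (MeasurableSet.of_discrete (s := {n : ℕ | Odd n}))
  -- pointwise: product of g equals parity sign
  have hprod : ∀ ω, ∏ i, g i ω
      = 1 + Set.indicator B (fun _ => (-2 : ℝ)) ω := by
    intro ω
    have h1 : ∏ i, g i ω
        = (-1 : ℝ) ^ (Finset.univ.filter (fun i => F i ω = true)).card := by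
      simp only [hg_def]
      rw [Finset.prod_ite (fun _ => (-1 : ℝ)) (fun _ => (1 : ℝ))]
      simp [Finset.prod_const]
    rw [h1]
    by_cases h : Odd (Finset.univ.filter (fun i => F i ω = true)).card
    · rw [Odd.neg_one_pow h]
      have : ω ∈ B := h
      simp [Set.indicator_of_mem this]
      norm_num
    · rw [Even.neg_one_pow (Nat.not_odd_iff_even.mp h)]
      have : ω ∉ B := h
      simp [Set.indicator_of_notMem this]
  -- combine
  have hmain : ∏ i, (1 - 2 * θ i) = 1 - 2 * (μ B).toReal := by
    calc ∏ i, (1 - 2 * θ i) = ∏ i, ∫ ω, g i ω ∂μ := by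
          exact Finset.prod_congr rfl fun i _ => (hInt_gi i).symm
      _ = ∫ ω, ∏ i, g i ω ∂μ := (integral_prod_indep μ g hgmeas hgb hgindep _).symm
      _ = ∫ ω, (1 + Set.indicator B (fun _ => (-2 : ℝ)) ω) ∂μ :=
          integral_congr_ae (Filter.Eventually.of_forall hprod)
      _ = 1 - 2 * (μ B).toReal := by
          rw [integral_add (integrable_const 1)
            ((integrable_const (-2 : ℝ)).indicator hBmeas),
            integral_const, integral_indicator_const _ hBmeas]
          simp
          rw [measureReal_def]
          ring
  -- bound the product
  have hθ0 : ∀ i, 0 ≤ θ i := fun i => (hθhalf i).1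
  have hθ2 : ∀ i, 2 * θ i ≤ 1 := fun i => by linarith [(hθhalf i).2]
  have hprod_le : ∏ i, (1 - 2 * θ i) ≤ 1 / 2 := by
    have step1 : ∀ i : Fin k, (1 - 2 * θ i) ≤ (1 + 2 * θ i)⁻¹ := by
      intro i
      have hpos : (0 : ℝ) < 1 + 2 * θ i := by linarith [hθ0 i]
      rw [← one_div, le_div_iff₀ hpos]
      nlinarith [hθ0 i, sq_nonneg (θ i)]
    have h1 : ∏ i, (1 - 2 * θ i) ≤ ∏ i, (1 + 2 * θ i)⁻¹ :=
      Finset.prod_le_prod (fun i _ => by linarith [hθ2 i]) (fun i _ => step1 i)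
    have h2 : (2 : ℝ) ≤ ∏ i, (1 + 2 * θ i) := by
      have := weierstrass_aux Finset.univ (fun i => 2 * θ i)
        (fun i _ => by show (0 : ℝ) ≤ 2 * θ i; linarith [hθ0 i])
      have hs : (1 : ℝ) ≤ ∑ i, 2 * θ i := by
        rw [← Finset.mul_sum]; linarith
      calc (2 : ℝ) = 1 + 1 := by norm_num
        _ ≤ 1 + ∑ i, 2 * θ i := by linarith
        _ ≤ ∏ i, (1 + 2 * θ i) := this
    have h3 : (∏ i, (1 + 2 * θ i))⁻¹ ≤ (2 : ℝ)⁻¹ := by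
      apply inv_anti₀ (by norm_num) h2
    calc ∏ i, (1 - 2 * θ i) ≤ ∏ i, (1 + 2 * θ i)⁻¹ := h1
      _ = (∏ i, (1 + 2 * θ i))⁻¹ := by rw [Finset.prod_inv_distrib]
      _ ≤ (2 : ℝ)⁻¹ := h3
      _ = 1 / 2 := by norm_num
  have hBnn : 0 ≤ (μ B).toReal := ENNReal.toReal_nonneg
  have : 1 / 4 ≤ (μ B).toReal := by linarith [hmain ▸ hprod_le]
  calc (2 : ℝ)⁻¹ ^ 4 = 1 / 16 := by norm_num
    _ ≤ (μ B).toReal := by linarith
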